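/- Stabilization up to permutation: fix m, an envelope configuration F, and a state X. Suppose the sequence N·X stabilizes at X̃ for some label sequence N ∈ {1,…,m}^ℕ. Then for any label sequence N' ∈ 𝒩_m there exists a permutation π of {1,…,m} such that N'·X stabilizes at π(X̃), where π(X̃) is X̃ with its particle labels permuted by π (positions and types permuted, counters unchanged). -/

import Mathlib

/-- A state of the activated random walk graphical construction with `m` particles on `ℤ`:
positions, types (`true` = B = active, `false` = A = passive) and envelope counters. -/
structure ARWState (m : ℕ) where
  pos : Fin m → ℤ
  typ : Fin m → Bool
  cnt : ℤ → ℕ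

/-- An envelope configuration takes values in `{-1, 0, 1}`:
`±1` is a jump instruction, `0` a sleep instruction. -/
def ValidEnvelopes (F : ℤ → ℕ → ℤ) : Prop :=
  ∀ z j, F z j = -1 ∨ F z j = 0 ∨ F z j = 1

/-- The action `n · X` of a label `n` on a state `X`. -/
def arwStep {m : ℕ} (F : ℤ → ℕ → ℤ) (n : Fin m) (X : ARWState m) : ARWState m :=
  if X.typ n = false then X
  else
    let z := X.pos n
    let instr := F z (X.cnt z)
    let cnt' : ℤ → ℕ := fun w => if w = z then X.cnt w + 1 else X.cnt w
    if instr = 0 then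
      { pos := X.pos
        typ := fun k =>
          if k = n then (if ∃ l, l ≠ n ∧ X.pos l = z then true else false) else X.typ k
        cnt := cnt' }
    else
      let pos' : Fin m → ℤ := fun k => if k = n then z + instr else X.pos k
      { pos := pos'
        typ := fun k => if pos' k = z + instr then true else X.typ k
        cnt := cnt' }

/-- The evolution `N · X`: `X₀ = X`, `X_{k+1} = n_{k+1} · X_k`. -/
def arwEvolve {m : ℕ} (F : ℤ → ℕ → ℤ) (N : ℕ → Fin m) (X : ARWState m) : ℕ → ARWState m
  | 0 => X
  | k + 1 => arwStep F (N k) (arwEvolve F N X k)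

/-- `N · X` stabilizes at `X'`: eventually the sequence is constantly `X'`,
and every particle of `X'` is passive. -/
def StabilizesAt {m : ℕ} (F : ℤ → ℕ → ℤ) (N : ℕ → Fin m) (X X' : ARWState m) : Prop :=
  (∃ k₀, ∀ k, k₀ ≤ k → arwEvolve F N X k = X') ∧ ∀ n, X'.typ n = false

/-- `𝒩_m`: label sequences in which every label occurs infinitely often. -/
def FairSeq {m : ℕ} (N : ℕ → Fin m) : Prop :=
  ∀ n : Fin m, ∀ k : ℕ, ∃ k', k ≤ k' ∧ N k' = n

/-- Number of jump instructions among the first `c` envelopes at site `z`. -/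
def jumpCount (F : ℤ → ℕ → ℤ) (z : ℤ) (c : ℕ) : ℕ :=
  ((Finset.range c).filter (fun j => F z j ≠ 0)).card

/-- The state `π(X)`: particles relabeled by the permutation `π`
(positions and types permuted, counters unchanged). -/
def permState {m : ℕ} (π : Equiv.Perm (Fin m)) (X : ARWState m) : ARWState m :=
  { pos := fun n => X.pos (π.symm n)
    typ := fun n => X.typ (π.symm n)
    cnt := X.cnt }

namespace ARW
variable {m : ℕ} (F : ℤ → ℕ → ℤ)

def Stable (X : ARWState m) : Prop := ∀ n, X.typ n = false

def act (w : List (Fin m)) (X : ARWState m) : ARWState m :=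
  w.foldl (fun Y n => arwStep F n Y) X

@[simp] lemma act_nil (X : ARWState m) : act F [] X = X := rfl
@[simp] lemma act_cons (n : Fin m) (w : List (Fin m)) (X : ARWState m) :
    act F (n :: w) X = act F w (arwStep F n X) := rfl
lemma act_append (w v : List (Fin m)) (X : ARWState m) :
    act F (w ++ v) X = act F v (act F w X) := List.foldl_append

lemma arwStep_passive {n : Fin m} {X : ARWState m} (h : X.typ n = false) :
    arwStep F n X = X := by simp [arwStep, h]

lemma act_stable {X : ARWState m} (h : Stable X) (w : List (Fin m)) :
    act F w X = X := by
  induction w with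
  | nil => rfl
  | cons a w ih => rw [act_cons, arwStep_passive F (h a), ih]

lemma evolve_eq_act (N : ℕ → Fin m) (X : ARWState m) (k : ℕ) :
    arwEvolve F N X k = act F ((List.range k).map N) X := by
  induction k with
  | zero => rfl
  | succ k ih =>
    rw [List.range_succ, List.map_append, act_append]
    simp [arwEvolve, ih, act]

lemma evolve_shift (N : ℕ → Fin m) (X : ARWState m) (a k : ℕ) :
    arwEvolve F N X (a + k) = arwEvolve F (fun i => N (a + i)) (arwEvolve F N X a) k := by
  induction k with
  | zero => rfl
  | succ k ih => rw [← Nat.add_assoc, arwEvolve, ih]; rfl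

lemma fair_shift {N : ℕ → Fin m} (h : FairSeq N) (a : ℕ) :
    FairSeq (fun i => N (a + i)) := by
  intro n k
  obtain ⟨k', hk', he⟩ := h n (a + k)
  refine ⟨k' - a, by omega, ?_⟩
  show N (a + (k' - a)) = n
  rw [show a + (k' - a) = k' by omega]; exact he

@[simp] lemma permState_one (X : ARWState m) : permState 1 X = X := by
  simp [permState]
  rfl

lemma permState_comp (π ρ : Equiv.Perm (Fin m)) (X : ARWState m) :
    permState π (permState ρ X) = permState (π * ρ) X := by
  simp [permState, Equiv.Perm.mul_def, Equiv.symm_trans_apply]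

lemma permState_stable {X : ARWState m} (h : Stable X) (π : Equiv.Perm (Fin m)) :
    Stable (permState π X) := fun n => h _

lemma typ_mono {n k : Fin m} {X : ARWState m} (hk : k ≠ n) (h : X.typ k = true) :
    (arwStep F n X).typ k = true := by
  unfold arwStep
  split
  · exact h
  · dsimp only
    split <;> simp [hk, h]
lemma ARWState.ext' {X Y : ARWState m} (hp : X.pos = Y.pos) (ht : X.typ = Y.typ)
    (hc : X.cnt = Y.cnt) : X = Y := by cases X; cases Y; simp_all

lemma arwStep_sleep {n : Fin m} {X : ARWState m} (h : X.typ n = true)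
    (hs : F (X.pos n) (X.cnt (X.pos n)) = 0) :
    arwStep F n X =
      { pos := X.pos
        typ := fun k => if k = n then (if ∃ l, l ≠ n ∧ X.pos l = X.pos n then true else false)
          else X.typ k
        cnt := fun w => if w = X.pos n then X.cnt w + 1 else X.cnt w } := by
  simp [arwStep, h, hs]

lemma arwStep_jump {n : Fin m} {X : ARWState m} (h : X.typ n = true)
    (hj : F (X.pos n) (X.cnt (X.pos n)) ≠ 0) :
    arwStep F n X =
      { pos := fun k => if k = n then X.pos n + F (X.pos n) (X.cnt (X.pos n)) else X.pos k
        typ := fun k => if k = n then true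
          else if X.pos k = X.pos n + F (X.pos n) (X.cnt (X.pos n)) then true else X.typ k
        cnt := fun w => if w = X.pos n then X.cnt w + 1 else X.cnt w } := by
  rw [arwStep, if_neg (by simp [h]), if_neg hj]
  refine ARWState.ext' rfl ?_ rfl
  funext k
  by_cases hk : k = n <;> simp [hk]

lemma step_equivariant (ρ : Equiv.Perm (Fin m)) (n : Fin m) (X : ARWState m) :
    arwStep F n (permState ρ X) = permState ρ (arwStep F (ρ.symm n) X) := by
  have hiff : ∀ p : Fin m, ρ.symm p = ρ.symm n ↔ p = n := fun p =>
    ⟨fun h => ρ.symm.injective h, fun h => by rw [h]⟩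
  by_cases h : X.typ (ρ.symm n) = true
  · have hpt : (permState ρ X).typ n = true := h
    have hex : (∃ l, l ≠ n ∧ (permState ρ X).pos l = (permState ρ X).pos n) ↔
        (∃ l, l ≠ ρ.symm n ∧ X.pos l = X.pos (ρ.symm n)) := by
      constructor
      · rintro ⟨l, hl, he⟩
        exact ⟨ρ.symm l, fun hc => hl ((hiff l).mp hc), he⟩
      · rintro ⟨l, hl, he⟩
        refine ⟨ρ l, fun hc => hl (by rw [← hc]; simp), ?_⟩
        show X.pos (ρ.symm (ρ l)) = X.pos (ρ.symm n)
        rwa [Equiv.symm_apply_apply]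
    by_cases hs : F (X.pos (ρ.symm n)) (X.cnt (X.pos (ρ.symm n))) = 0
    · rw [arwStep_sleep F hpt hs, arwStep_sleep F h hs]
      refine ARWState.ext' rfl ?_ rfl
      funext p
      show (if p = n then _ else _) = (if ρ.symm p = ρ.symm n then _ else _)
      rw [if_congr (hiff p) rfl rfl]
      by_cases hp : p = n
      · rw [if_pos hp, if_pos hp, if_congr hex rfl rfl]
      · rw [if_neg hp, if_neg hp]; rfl
    · rw [arwStep_jump F hpt hs, arwStep_jump F h hs]
      refine ARWState.ext' ?_ ?_ rfl
      · funext p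
        show (if p = n then _ else _) = (if ρ.symm p = ρ.symm n then _ else _)
        rw [if_congr (hiff p) rfl rfl]
        by_cases hp : p = n
        · rw [if_pos hp, if_pos hp]; rfl
        · rw [if_neg hp, if_neg hp]; rfl
      · funext p
        show (if p = n then _ else _) = (if ρ.symm p = ρ.symm n then _ else _)
        rw [if_congr (hiff p) rfl rfl]
        by_cases hp : p = n
        · rw [if_pos hp, if_pos hp]
        · rw [if_neg hp, if_neg hp]; rfl
  · have h' : X.typ (ρ.symm n) = false := by simpa using h
    rw [arwStep_passive F (show (permState ρ X).typ n = false from h'),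
      arwStep_passive F h']

lemma act_equivariant (ρ : Equiv.Perm (Fin m)) (w : List (Fin m)) (X : ARWState m) :
    act F w (permState ρ X) = permState ρ (act F (w.map (fun k => ρ.symm k)) X) := by
  induction w generalizing X with
  | nil => rfl
  | cons a w ih => rw [act_cons, step_equivariant, ih]; rfl

section proj
variable {n : Fin m} {X : ARWState m}

lemma pos_sleep (h : X.typ n = true) (hs : F (X.pos n) (X.cnt (X.pos n)) = 0) :
    (arwStep F n X).pos = X.pos := by rw [arwStep_sleep F h hs]

lemma typ_sleep (h : X.typ n = true) (hs : F (X.pos n) (X.cnt (X.pos n)) = 0) :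
    (arwStep F n X).typ = fun k =>
      if k = n then (if ∃ l, l ≠ n ∧ X.pos l = X.pos n then true else false) else X.typ k := by
  rw [arwStep_sleep F h hs]

lemma pos_jump (h : X.typ n = true) (hj : F (X.pos n) (X.cnt (X.pos n)) ≠ 0) :
    (arwStep F n X).pos = fun k =>
      if k = n then X.pos n + F (X.pos n) (X.cnt (X.pos n)) else X.pos k := by
  rw [arwStep_jump F h hj]

lemma typ_jump (h : X.typ n = true) (hj : F (X.pos n) (X.cnt (X.pos n)) ≠ 0) :
    (arwStep F n X).typ = fun k =>
      if k = n then true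
      else if X.pos k = X.pos n + F (X.pos n) (X.cnt (X.pos n)) then true else X.typ k := by
  rw [arwStep_jump F h hj]

lemma cnt_step_active (h : X.typ n = true) :
    (arwStep F n X).cnt = fun w => if w = X.pos n then X.cnt w + 1 else X.cnt w := by
  by_cases hs : F (X.pos n) (X.cnt (X.pos n)) = 0
  · rw [arwStep_sleep F h hs]
  · rw [arwStep_jump F h hs]

end proj

lemma comm_ss {n l : Fin m} {X : ARWState m} (hn : X.typ n = true) (hl : X.typ l = true)
    (hpos : X.pos n ≠ X.pos l)
    (hsn : F (X.pos n) (X.cnt (X.pos n)) = 0) (hsl : F (X.pos l) (X.cnt (X.pos l)) = 0) :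
    arwStep F l (arwStep F n X) = arwStep F n (arwStep F l X) := by
  have hln : l ≠ n := fun h => hpos (by rw [h])
  have hnl : n ≠ l := fun h => hpos (by rw [h])
  have hYt : (arwStep F n X).typ l = true := typ_mono F hln hl
  have hZt : (arwStep F l X).typ n = true := typ_mono F hnl hn
  have hYp : (arwStep F n X).pos = X.pos := pos_sleep F hn hsn
  have hZp : (arwStep F l X).pos = X.pos := pos_sleep F hl hsl
  have hYc := cnt_step_active F hn
  have hZc := cnt_step_active F hl
  have hsl' : F ((arwStep F n X).pos l) ((arwStep F n X).cnt ((arwStep F n X).pos l)) = 0 := by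
    rw [hYp, hYc]; simpa [hpos.symm] using hsl
  have hsn' : F ((arwStep F l X).pos n) ((arwStep F l X).cnt ((arwStep F l X).pos n)) = 0 := by
    rw [hZp, hZc]; simpa [hpos] using hsn
  refine ARWState.ext' ?_ ?_ ?_
  · rw [pos_sleep F hYt hsl', pos_sleep F hZt hsn', hYp, hZp]
  · rw [typ_sleep F hYt hsl', typ_sleep F hZt hsn', typ_sleep F hn hsn, typ_sleep F hl hsl,
      hYp, hZp]
    funext p
    by_cases hp1 : p = l <;> by_cases hp2 : p = n <;> simp [hp1, hp2, hln, hnl]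
  · rw [cnt_step_active F hYt, cnt_step_active F hZt, hYp, hZp, hYc, hZc]
    funext w
    by_cases h1 : w = X.pos l <;> by_cases h2 : w = X.pos n <;> simp [h1, h2, hpos, hpos.symm]

lemma comm_jj {n l : Fin m} {X : ARWState m} (hn : X.typ n = true) (hl : X.typ l = true)
    (hpos : X.pos n ≠ X.pos l)
    (hjn : F (X.pos n) (X.cnt (X.pos n)) ≠ 0) (hjl : F (X.pos l) (X.cnt (X.pos l)) ≠ 0) :
    arwStep F l (arwStep F n X) = arwStep F n (arwStep F l X) := by
  have hln : l ≠ n := fun h => hpos (by rw [h])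
  have hnl : n ≠ l := fun h => hpos (by rw [h])
  have hYt : (arwStep F n X).typ l = true := typ_mono F hln hl
  have hZt : (arwStep F l X).typ n = true := typ_mono F hnl hn
  have hYp := pos_jump F hn hjn
  have hZp := pos_jump F hl hjl
  have hYc := cnt_step_active F hn
  have hZc := cnt_step_active F hl
  have hYpl : (arwStep F n X).pos l = X.pos l := by rw [hYp]; simp [hln]
  have hZpn : (arwStep F l X).pos n = X.pos n := by rw [hZp]; simp [hnl]
  have hYcl : (arwStep F n X).cnt (X.pos l) = X.cnt (X.pos l) := by
    rw [hYc]; simp [hpos.symm]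
  have hZcn : (arwStep F l X).cnt (X.pos n) = X.cnt (X.pos n) := by
    rw [hZc]; simp [hpos]
  have hjl' : F ((arwStep F n X).pos l) ((arwStep F n X).cnt ((arwStep F n X).pos l)) ≠ 0 := by
    rw [hYpl, hYcl]; exact hjl
  have hjn' : F ((arwStep F l X).pos n) ((arwStep F l X).cnt ((arwStep F l X).pos n)) ≠ 0 := by
    rw [hZpn, hZcn]; exact hjn
  refine ARWState.ext' ?_ ?_ ?_
  · rw [pos_jump F hYt hjl', pos_jump F hZt hjn', hYpl, hZpn, hYcl, hZcn, hYp, hZp]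
    funext p
    by_cases hp1 : p = l <;> by_cases hp2 : p = n <;> simp [hp1, hp2, hln, hnl]
  · rw [typ_jump F hYt hjl', typ_jump F hZt hjn', hYpl, hZpn, hYcl, hZcn,
      typ_jump F hn hjn, typ_jump F hl hjl, hYp, hZp]
    funext p
    by_cases hp1 : p = l <;> by_cases hp2 : p = n <;>
      simp [hp1, hp2, hln, hnl] <;>
      by_cases h3 : X.pos p = X.pos l + F (X.pos l) (X.cnt (X.pos l)) <;>
      by_cases h4 : X.pos p = X.pos n + F (X.pos n) (X.cnt (X.pos n)) <;>
      simp [h3, h4]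
  · rw [cnt_step_active F hYt, cnt_step_active F hZt, hYpl, hZpn, hYc, hZc]
    funext w
    by_cases h1 : w = X.pos l <;> by_cases h2 : w = X.pos n <;> simp [h1, h2, hpos, hpos.symm]

lemma comm_js {n l : Fin m} {X : ARWState m} (hn : X.typ n = true) (hl : X.typ l = true)
    (hpos : X.pos n ≠ X.pos l)
    (hjn : F (X.pos n) (X.cnt (X.pos n)) ≠ 0) (hsl : F (X.pos l) (X.cnt (X.pos l)) = 0) :
    arwStep F l (arwStep F n X) = arwStep F n (arwStep F l X) := by
  have hln : l ≠ n := fun h => hpos (by rw [h])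
  have hnl : n ≠ l := fun h => hpos (by rw [h])
  have hYt : (arwStep F n X).typ l = true := typ_mono F hln hl
  have hZt : (arwStep F l X).typ n = true := typ_mono F hnl hn
  have hYp := pos_jump F hn hjn
  have hZp := pos_sleep F hl hsl
  have hYc := cnt_step_active F hn
  have hZc := cnt_step_active F hl
  have hYpl : (arwStep F n X).pos l = X.pos l := by rw [hYp]; simp [hln]
  have hZpn : (arwStep F l X).pos n = X.pos n := by rw [hZp]
  have hYcl : (arwStep F n X).cnt (X.pos l) = X.cnt (X.pos l) := by
    rw [hYc]; simp [hpos.symm]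
  have hZcn : (arwStep F l X).cnt (X.pos n) = X.cnt (X.pos n) := by
    rw [hZc]; simp [hpos]
  have hsl' : F ((arwStep F n X).pos l) ((arwStep F n X).cnt ((arwStep F n X).pos l)) = 0 := by
    rw [hYpl, hYcl]; exact hsl
  have hjn' : F ((arwStep F l X).pos n) ((arwStep F l X).cnt ((arwStep F l X).pos n)) ≠ 0 := by
    rw [hZpn, hZcn]; exact hjn
  refine ARWState.ext' ?_ ?_ ?_
  · rw [pos_sleep F hYt hsl', pos_jump F hZt hjn', hZpn, hZcn, hYp, hZp]
  · rw [typ_sleep F hYt hsl', typ_jump F hZt hjn', hYpl, hZpn, hZcn,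
      typ_jump F hn hjn, typ_sleep F hl hsl, hYp, hZp]
    funext p
    by_cases hp1 : p = l <;> by_cases hp2 : p = n
    · exact absurd (hp1 ▸ hp2 ▸ rfl : n = l) hnl
    · -- p = l : the delicate sleep-condition case
      subst hp1
      simp only [if_pos rfl, if_neg hp2, if_neg hln]
      simp only [if_true]
      by_cases hzz : X.pos p = X.pos n + F (X.pos n) (X.cnt (X.pos n))
      · have hc : ∃ j, j ≠ p ∧
            (if j = n then X.pos n + F (X.pos n) (X.cnt (X.pos n)) else X.pos j) = X.pos p :=
          ⟨n, hnl, by rw [if_pos rfl, ← hzz]⟩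
        rw [if_pos hzz, if_pos hc]
      · have hc : (∃ j, j ≠ p ∧
            (if j = n then X.pos n + F (X.pos n) (X.cnt (X.pos n)) else X.pos j) = X.pos p) ↔
            (∃ j, j ≠ p ∧ X.pos j = X.pos p) := by
          constructor
          · rintro ⟨j, hj, he⟩
            by_cases hjn2 : j = n
            · rw [if_pos hjn2] at he; exact absurd he.symm hzz
            · rw [if_neg hjn2] at he; exact ⟨j, hj, he⟩
          · rintro ⟨j, hj, he⟩
            have hjn2 : j ≠ n := fun h => by rw [h] at he; exact hpos he
            exact ⟨j, hj, by rw [if_neg hjn2]; exact he⟩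
        rw [if_neg hzz, if_congr hc rfl rfl]
    · subst hp2; simp [hnl]
    · simp [hp1, hp2]
  · rw [cnt_step_active F hYt, cnt_step_active F hZt, hYpl, hZpn, hYc, hZc]
    funext w
    by_cases h1 : w = X.pos l <;> by_cases h2 : w = X.pos n <;> simp [h1, h2, hpos, hpos.symm]

lemma step_comm_ne {n l : Fin m} {X : ARWState m} (hn : X.typ n = true) (hl : X.typ l = true)
    (hpos : X.pos n ≠ X.pos l) :
    arwStep F l (arwStep F n X) = arwStep F n (arwStep F l X) := by
  by_cases hn0 : F (X.pos n) (X.cnt (X.pos n)) = 0 <;>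
    by_cases hl0 : F (X.pos l) (X.cnt (X.pos l)) = 0
  · exact comm_ss F hn hl hpos hn0 hl0
  · exact (comm_js F hl hn hpos.symm hl0 hn0).symm
  · exact comm_js F hn hl hpos hn0 hl0
  · exact comm_jj F hn hl hpos hn0 hl0

lemma step_comm_eq {n l : Fin m} {X : ARWState m} (hn : X.typ n = true) (hl : X.typ l = true)
    (hnl : n ≠ l) (hpos : X.pos n = X.pos l) :
    arwStep F l (arwStep F n X) = permState (Equiv.swap n l) (arwStep F n (arwStep F l X)) := by
  have hln : l ≠ n := Ne.symm hnl
  have hzl : X.pos l = X.pos n := hpos.symm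
  have hbn : ∃ j, j ≠ n ∧ X.pos j = X.pos n := ⟨l, hln, hzl⟩
  have hbl : ∃ j, j ≠ l ∧ X.pos j = X.pos l := ⟨n, hnl, hpos⟩
  have hYt : (arwStep F n X).typ l = true := typ_mono F hln hl
  have hZt : (arwStep F l X).typ n = true := typ_mono F hnl hn
  have hYcf := cnt_step_active F hn
  have hZcf := cnt_step_active F hl
  by_cases hA : F (X.pos n) (X.cnt (X.pos n)) = 0 <;>
    by_cases hB : F (X.pos n) (X.cnt (X.pos n) + 1) = 0
  -- case A : sleep then sleep
  · have hAl : F (X.pos l) (X.cnt (X.pos l)) = 0 := by rw [hzl]; exact hA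
    have hYp := pos_sleep F hn hA
    have hZp := pos_sleep F hl hAl
    have hYtf := typ_sleep F hn hA
    have hZtf := typ_sleep F hl hAl
    have hYpl : (arwStep F n X).pos l = X.pos n := by rw [hYp, hzl]
    have hZpn : (arwStep F l X).pos n = X.pos n := by rw [hZp]
    have hBY : F ((arwStep F n X).pos l) ((arwStep F n X).cnt ((arwStep F n X).pos l)) = 0 := by
      rw [hYpl, hYcf]; simp [hB]
    have hBZ : F ((arwStep F l X).pos n) ((arwStep F l X).cnt ((arwStep F l X).pos n)) = 0 := by
      rw [hZpn, hZcf]; simp only [hzl]; simp [hB]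
    have hcondY : (∃ j, j ≠ l ∧ (arwStep F n X).pos j = (arwStep F n X).pos l) := by
      rw [hYpl, hYp]; exact ⟨n, hnl, rfl⟩
    have hcondZ : (∃ j, j ≠ n ∧ (arwStep F l X).pos j = (arwStep F l X).pos n) := by
      rw [hZpn, hZp]; exact ⟨l, hln, hzl⟩
    refine ARWState.ext' ?_ ?_ ?_ <;> simp only [permState]
    · rw [pos_sleep F hYt hBY, pos_sleep F hZt hBZ, hYp, hZp]
      funext p
      rcases eq_or_ne p n with hp | hp
      · simp [hp, hzl]
      · rcases eq_or_ne p l with hq | hq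
        · simp [hq, hpos]
        · simp [Equiv.swap_apply_of_ne_of_ne hp hq]
    · rw [typ_sleep F hYt hBY, typ_sleep F hZt hBZ, hYtf, hZtf]
      funext p
      rcases eq_or_ne p n with hp | hp
      · simp [hp, hnl, hln, hcondY, hcondZ, hbn, hbl]
      · rcases eq_or_ne p l with hq | hq
        · simp [hq, hnl, hln, hcondY, hcondZ, hbn, hbl]
        · simp [Equiv.swap_apply_of_ne_of_ne hp hq, hp, hq]
    · rw [cnt_step_active F hYt, cnt_step_active F hZt, hYpl, hZpn, hYcf, hZcf]
      funext w
      rcases eq_or_ne w (X.pos n) with hw | hw <;> simp [hw, hzl]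
  -- case B : sleep then jump
  · have hAl : F (X.pos l) (X.cnt (X.pos l)) = 0 := by rw [hzl]; exact hA
    have hYp := pos_sleep F hn hA
    have hZp := pos_sleep F hl hAl
    have hYtf := typ_sleep F hn hA
    have hZtf := typ_sleep F hl hAl
    have hYpl : (arwStep F n X).pos l = X.pos n := by rw [hYp, hzl]
    have hZpn : (arwStep F l X).pos n = X.pos n := by rw [hZp]
    have hBY : F ((arwStep F n X).pos l) ((arwStep F n X).cnt ((arwStep F n X).pos l)) ≠ 0 := by
      rw [hYpl, hYcf]; simpa using hB
    have hBZ : F ((arwStep F l X).pos n) ((arwStep F l X).cnt ((arwStep F l X).pos n)) ≠ 0 := by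
      rw [hZpn, hZcf]; simp only [hzl]; simpa using hB
    have hcY : (arwStep F n X).cnt ((arwStep F n X).pos l) = X.cnt (X.pos n) + 1 := by
      rw [hYpl, hYcf]; simp
    have hcZ : (arwStep F l X).cnt ((arwStep F l X).pos n) = X.cnt (X.pos n) + 1 := by
      rw [hZpn, hZcf]; simp only [hzl]; simp
    have hBne : X.pos n + F (X.pos n) (X.cnt (X.pos n) + 1) ≠ X.pos n := fun h => hB (by omega)
    have hbl' : ∃ j, j ≠ l ∧ X.pos j = X.pos n := ⟨n, hnl, rfl⟩
    refine ARWState.ext' ?_ ?_ ?_ <;> simp only [permState]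
    · rw [pos_jump F hYt hBY, pos_jump F hZt hBZ, hcY, hcZ, hYpl, hZpn, hYp, hZp]
      funext p
      rcases eq_or_ne p n with hp | hp
      · simp [hp, hzl, hnl, hln]
      · rcases eq_or_ne p l with hq | hq
        · simp [hq, hzl, hnl, hln]
        · simp [Equiv.swap_apply_of_ne_of_ne hp hq, hp, hq]
    · rw [typ_jump F hYt hBY, typ_jump F hZt hBZ, hcY, hcZ, hYpl, hZpn, hYp, hZp, hYtf, hZtf]
      funext p
      rcases eq_or_ne p n with hp | hp
      · simp [hp, hzl, hnl, hln, hbn, hbl, hbl', hBne]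
      · rcases eq_or_ne p l with hq | hq
        · simp [hq, hzl, hnl, hln, hbn, hbl, hbl', hBne]
        · simp [Equiv.swap_apply_of_ne_of_ne hp hq, hp, hq, hzl, hbn, hbl, hbl']
    · rw [cnt_step_active F hYt, cnt_step_active F hZt, hYpl, hZpn, hYcf, hZcf]
      funext w
      rcases eq_or_ne w (X.pos n) with hw | hw <;> simp [hw, hzl]
  -- case C : jump then sleep
  · have hAl : F (X.pos l) (X.cnt (X.pos l)) ≠ 0 := by rw [hzl]; exact hA
    have hYp := pos_jump F hn hA
    have hZp := pos_jump F hl hAl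
    have hYtf := typ_jump F hn hA
    have hZtf := typ_jump F hl hAl
    have hYpl : (arwStep F n X).pos l = X.pos n := by rw [hYp]; simp [hln, hzl]
    have hZpn : (arwStep F l X).pos n = X.pos n := by rw [hZp]; simp [hnl, hpos]
    have hBY : F ((arwStep F n X).pos l) ((arwStep F n X).cnt ((arwStep F n X).pos l)) = 0 := by
      rw [hYpl, hYcf]; simp [hB]
    have hBZ : F ((arwStep F l X).pos n) ((arwStep F l X).cnt ((arwStep F l X).pos n)) = 0 := by
      rw [hZpn, hZcf]; simp only [hzl]; simp [hB]
    have hAne : X.pos n + F (X.pos n) (X.cnt (X.pos n)) ≠ X.pos n := fun h => hA (by omega)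
    have hcondY : (∃ j, j ≠ l ∧ (arwStep F n X).pos j = (arwStep F n X).pos l) ↔
        (∃ j, j ≠ n ∧ j ≠ l ∧ X.pos j = X.pos n) := by
      rw [hYpl, hYp]
      constructor
      · rintro ⟨j, hj, he⟩
        rcases eq_or_ne j n with h2 | h2
        · rw [h2] at he; simp only [if_pos rfl] at he; exact absurd he hAne
        · simp only [if_neg h2] at he; exact ⟨j, h2, hj, he⟩
      · rintro ⟨j, h2, hj, he⟩
        exact ⟨j, hj, by simp [h2, he]⟩
    have hcondZ : (∃ j, j ≠ n ∧ (arwStep F l X).pos j = (arwStep F l X).pos n) ↔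
        (∃ j, j ≠ n ∧ j ≠ l ∧ X.pos j = X.pos n) := by
      rw [hZpn, hZp]
      have hAne' : X.pos l + F (X.pos l) (X.cnt (X.pos l)) ≠ X.pos n := by
        rw [hzl]; exact hAne
      constructor
      · rintro ⟨j, hj, he⟩
        rcases eq_or_ne j l with h2 | h2
        · rw [h2] at he; simp only [if_pos rfl] at he; exact absurd he hAne'
        · simp only [if_neg h2] at he; exact ⟨j, hj, h2, he⟩
      · rintro ⟨j, h2, hj, he⟩
        exact ⟨j, h2, by simp [hj, he]⟩
    refine ARWState.ext' ?_ ?_ ?_ <;> simp only [permState]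
    · rw [pos_sleep F hYt hBY, pos_sleep F hZt hBZ, hYp, hZp]
      funext p
      rcases eq_or_ne p n with hp | hp
      · simp [hp, hzl, hnl, hln]
      · rcases eq_or_ne p l with hq | hq
        · simp [hq, hzl, hnl, hln]
        · simp [Equiv.swap_apply_of_ne_of_ne hp hq, hp, hq]
    · rw [typ_sleep F hYt hBY, typ_sleep F hZt hBZ,
        if_congr hcondY rfl rfl, if_congr hcondZ rfl rfl, hYtf, hZtf]
      funext p
      rcases eq_or_ne p n with hp | hp
      · simp [hp, hzl, hnl, hln]
      · rcases eq_or_ne p l with hq | hq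
        · simp [hq, hzl, hnl, hln]
        · simp [Equiv.swap_apply_of_ne_of_ne hp hq, hp, hq, hzl]
    · rw [cnt_step_active F hYt, cnt_step_active F hZt, hYpl, hZpn, hYcf, hZcf]
      funext w
      rcases eq_or_ne w (X.pos n) with hw | hw <;> simp [hw, hzl]
  -- case D : jump then jump
  · have hAl : F (X.pos l) (X.cnt (X.pos l)) ≠ 0 := by rw [hzl]; exact hA
    have hYp := pos_jump F hn hA
    have hZp := pos_jump F hl hAl
    have hYtf := typ_jump F hn hA
    have hZtf := typ_jump F hl hAl
    have hYpl : (arwStep F n X).pos l = X.pos n := by rw [hYp]; simp [hln, hzl]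
    have hZpn : (arwStep F l X).pos n = X.pos n := by rw [hZp]; simp [hnl, hpos]
    have hBY : F ((arwStep F n X).pos l) ((arwStep F n X).cnt ((arwStep F n X).pos l)) ≠ 0 := by
      rw [hYpl, hYcf]; simpa using hB
    have hBZ : F ((arwStep F l X).pos n) ((arwStep F l X).cnt ((arwStep F l X).pos n)) ≠ 0 := by
      rw [hZpn, hZcf]; simp only [hzl]; simpa using hB
    have hcY : (arwStep F n X).cnt ((arwStep F n X).pos l) = X.cnt (X.pos n) + 1 := by
      rw [hYpl, hYcf]; simp
    have hcZ : (arwStep F l X).cnt ((arwStep F l X).pos n) = X.cnt (X.pos n) + 1 := by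
      rw [hZpn, hZcf]; simp only [hzl]; simp
    refine ARWState.ext' ?_ ?_ ?_ <;> simp only [permState]
    · rw [pos_jump F hYt hBY, pos_jump F hZt hBZ, hcY, hcZ, hYpl, hZpn, hYp, hZp]
      funext p
      rcases eq_or_ne p n with hp | hp
      · simp [hp, hzl, hnl, hln]
      · rcases eq_or_ne p l with hq | hq
        · simp [hq, hzl, hnl, hln]
        · simp [Equiv.swap_apply_of_ne_of_ne hp hq, hp, hq]
    · rw [typ_jump F hYt hBY, typ_jump F hZt hBZ, hcY, hcZ, hYpl, hZpn, hYtf, hZtf, hYp, hZp]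
      funext p
      rcases eq_or_ne p n with hp | hp
      · simp [hp, hzl, hnl, hln]
      · rcases eq_or_ne p l with hq | hq
        · simp [hq, hzl, hnl, hln]
        · by_cases h3 : X.pos p = X.pos n + F (X.pos n) (X.cnt (X.pos n)) <;>
          by_cases h4 : X.pos p = X.pos n + F (X.pos n) (X.cnt (X.pos n) + 1) <;>
            simp [Equiv.swap_apply_of_ne_of_ne hp hq, hp, hq, hzl, h3, h4]
    · rw [cnt_step_active F hYt, cnt_step_active F hZt, hYpl, hZpn, hYcf, hZcf]
      funext w
      rcases eq_or_ne w (X.pos n) with hw | hw <;> simp [hw, hzl]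

lemma reduction {w : List (Fin m)} {X : ARWState m} {n : Fin m}
    (hstab : Stable (act F w X)) (hn : X.typ n = true) :
    ∃ w' : List (Fin m), w'.length < w.length ∧
      ∃ σ : Equiv.Perm (Fin m), act F w' (arwStep F n X) = permState σ (act F w X) := by
  induction w generalizing X n with
  | nil => exact absurd (hstab n) (by simp [hn])
  | cons l w ih =>
    rcases eq_or_ne l n with rfl | hln
    · exact ⟨w, by simp, 1, by simp [act_cons]⟩
    · by_cases hl : X.typ l = true
      · have hn' : (arwStep F l X).typ n = true := typ_mono F (Ne.symm hln) hn
        have hstab' : Stable (act F w (arwStep F l X)) := by simpa [act_cons] using hstab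
        obtain ⟨v, hv, σ, hσ⟩ := ih hstab' hn'
        rcases eq_or_ne (X.pos n) (X.pos l) with hpp | hpp
        · refine ⟨l :: v.map (Equiv.swap n l), by simpa using hv, Equiv.swap n l * σ, ?_⟩
          rw [act_cons, step_comm_eq F hn hl (Ne.symm hln) hpp, act_equivariant]
          have hvv : (v.map (Equiv.swap n l)).map (fun k => (Equiv.swap n l).symm k) = v := by
            simp [List.map_map, Function.comp_def, Equiv.symm_swap, Equiv.swap_apply_self]
          rw [hvv, hσ, permState_comp, act_cons]
        · refine ⟨l :: v, by simpa using hv, σ, ?_⟩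
          rw [act_cons, step_comm_ne F hn hl hpp, hσ, act_cons]
      · have hX : arwStep F l X = X := arwStep_passive F (by simpa using hl)
        have hstab2 : Stable (act F w X) := by simpa [act_cons, hX] using hstab
        obtain ⟨v, hv, σ, hσ⟩ := ih hstab2 hn
        exact ⟨v, by simp; omega, σ, by rw [hσ, act_cons, hX]⟩

lemma evolve_stable {X : ARWState m} (h : Stable X) (N : ℕ → Fin m) (k : ℕ) :
    arwEvolve F N X k = X := by
  induction k with
  | zero => rfl
  | succ k ih => rw [arwEvolve, ih, arwStep_passive F (h _)]

lemma stabilize_fair : ∀ (L : ℕ) (w : List (Fin m)), w.length ≤ L →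
    ∀ (X : ARWState m), Stable (act F w X) → ∀ (N : ℕ → Fin m), FairSeq N →
    ∃ σ : Equiv.Perm (Fin m), StabilizesAt F N X (permState σ (act F w X)) := by
  intro L
  induction L with
  | zero =>
    intro w hw X hstab N _
    have hw0 : w = [] := List.length_eq_zero_iff.mp (by omega)
    subst hw0
    exact ⟨1, ⟨0, fun k _ => (evolve_stable F hstab N k).trans (permState_one _).symm⟩,
      fun p => hstab p⟩
  | succ L IH =>
    intro w hw X hstab N hN
    by_cases hstable : Stable X
    · have hact : act F w X = X := act_stable F hstable w
      exact ⟨1, ⟨0, fun k _ => by rw [evolve_stable F hstable N k, permState_one, hact]⟩,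
        fun p => by rw [permState_one, hact]; exact hstable p⟩
    · have hex : ∃ n, X.typ n = true := by
        by_contra hno; push_neg at hno
        exact hstable fun p => by simpa using hno p
      obtain ⟨n, hn⟩ := hex
      have hS : ∃ k, (arwEvolve F N X k).typ (N k) = true := by
        by_contra hno; push_neg at hno
        have hall : ∀ k, arwEvolve F N X k = X := by
          intro k
          induction k with
          | zero => rfl
          | succ k ih =>
            have h2 := hno k
            rw [ih] at h2
            rw [arwEvolve, ih, arwStep_passive F (by simpa using h2)]
        obtain ⟨k', _, hk'⟩ := hN n 0
        have h3 := hno k'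
        rw [hall k', hk'] at h3
        exact h3 hn
      have ht : (arwEvolve F N X (Nat.find hS)).typ (N (Nat.find hS)) = true := Nat.find_spec hS
      have hXt : ∀ k, k ≤ Nat.find hS → arwEvolve F N X k = X := by
        intro k hk
        induction k with
        | zero => rfl
        | succ k ih =>
          have h1 : arwEvolve F N X k = X := ih (by omega)
          have h2 := Nat.find_min hS (show k < Nat.find hS by omega)
          rw [h1] at h2
          rw [arwEvolve, h1, arwStep_passive F (by simpa using h2)]
      have hXt' : arwEvolve F N X (Nat.find hS) = X := hXt _ le_rfl
      rw [hXt'] at ht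
      obtain ⟨w', hlen, σ, hσ⟩ := reduction F hstab ht
      have hstab' : Stable (act F w' (arwStep F (N (Nat.find hS)) X)) := by
        rw [hσ]; exact permState_stable hstab σ
      obtain ⟨σ', hσ'⟩ := IH w' (by omega) _ hstab'
        (fun i => N (Nat.find hS + 1 + i)) (fair_shift hN _)
      refine ⟨σ' * σ, ?_, fun p => permState_stable hstab (σ' * σ) p⟩
      obtain ⟨k₀, hk₀⟩ := hσ'.1
      refine ⟨Nat.find hS + 1 + k₀, fun k hk => ?_⟩
      have hkk : k = Nat.find hS + 1 + (k - (Nat.find hS + 1)) := by omega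
      rw [hkk, evolve_shift]
      have hev : arwEvolve F N X (Nat.find hS + 1) = arwStep F (N (Nat.find hS)) X := by
        rw [arwEvolve, hXt']
      rw [hev, hk₀ _ (by omega), hσ, permState_comp]

end ARW

/-- **Stabilization up to permutation.** If `N · X` stabilizes at `Xf` for some label
sequence `N`, then for any label sequence `N' ∈ 𝒩_m` there is a permutation `π` of the
particle labels such that `N' · X` stabilizes at `π(Xf)`. -/
theorem arw_stabilization_up_to_permutation {m : ℕ} (F : ℤ → ℕ → ℤ) (hF : ValidEnvelopes F)
    (X Xf : ARWState m) (N : ℕ → Fin m) (hstab : StabilizesAt F N X Xf)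
    (N' : ℕ → Fin m) (hN' : FairSeq N') :
    ∃ π : Equiv.Perm (Fin m), StabilizesAt F N' X (permState π Xf) := by
  obtain ⟨⟨k₀, hk⟩, hpass⟩ := hstab
  have hact : ARW.act F ((List.range k₀).map N) X = Xf := by
    rw [← ARW.evolve_eq_act]; exact hk k₀ le_rfl
  have hstable : ARW.Stable (ARW.act F ((List.range k₀).map N) X) := by
    rw [hact]; exact hpass
  obtain ⟨σ, hσ⟩ := ARW.stabilize_fair F ((List.range k₀).map N).length _ le_rfl X hstable N' hN'
  rw [hact] at hσ
  exact ⟨σ, hσ⟩
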